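/- Let v₁, v₂, v₃, v₄ ∈ (0,1) be rational numbers, and for each integer n define α_n := Σ_{i=1}^{4} (1 + n·v_i - ⌈n·v_i⌉). Suppose α_n ≥ α_1 for every integer n. Then α_1 does not lie in the open interval (2 - 1/6, 2) = (11/6, 2). -/

import Mathlib

open Finset

namespace Stmt4Aux

/-- fract (n*a) = 0 iff den(a) divides n. -/
lemma fract_mul_eq_zero_iff (a : ℚ) (n : ℤ) :
    Int.fract ((n : ℚ) * a) = 0 ↔ (a.den : ℤ) ∣ n := by
  constructor
  · intro h
    have h2 : ((n : ℚ) * a) = (⌊(n : ℚ) * a⌋ : ℚ) := by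
      have := Int.self_sub_floor ((n : ℚ) * a)
      rw [h] at this
      linarith
    set z := ⌊(n : ℚ) * a⌋ with hz
    have hden : (0:ℚ) < (a.den : ℚ) := by exact_mod_cast a.den_pos
    have h3 : (n : ℚ) * ((a.num : ℚ) / (a.den : ℚ)) = (z : ℚ) := by
      rw [Rat.num_div_den]; exact h2
    have h4 : ((n * a.num : ℤ) : ℚ) = ((z * a.den : ℤ) : ℚ) := by
      push_cast
      field_simp at h3 ⊢
      linarith
    have h5 : n * a.num = z * (a.den : ℤ) := by exact_mod_cast h4
    have h6 : (a.den : ℤ) ∣ a.num * n := ⟨z, by linarith⟩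
    have hcop : Int.gcd (a.den : ℤ) a.num = 1 := by
      have := a.reduced
      simpa [Int.gcd, Nat.coprime_comm] using this.symm
    exact Int.dvd_of_dvd_mul_right_of_gcd_one h6 hcop
  · rintro ⟨m, hm⟩
    have hden : ((a.den : ℚ)) ≠ 0 := by
      exact_mod_cast a.den_pos.ne'
    have hda : a * ((a.den : ℚ)) = (a.num : ℚ) := by
      nth_rewrite 1 [← Rat.num_div_den a]
      exact div_mul_cancel₀ _ hden
    have : (n : ℚ) * a = ((m * a.num : ℤ) : ℚ) := by
      rw [hm]
      push_cast
      rw [← hda]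
      ring
    rw [this, Int.fract_intCast]

lemma two_le_den (a : ℚ) (h0 : 0 < a) (h1 : a < 1) : 2 ≤ a.den := by
  by_contra h
  push_neg at h
  interval_cases hd : a.den
  · exact absurd hd a.den_pos.ne'
  · have : (a.num : ℚ) = a := by
      conv_rhs => rw [← Rat.num_div_den a]
      rw [hd]; simp
    have h2 : (0:ℚ) < (a.num:ℚ) := by rw [this]; exact h0
    have h3 : (a.num:ℚ) < 1 := by rw [this]; exact h1
    have h4 : 0 < a.num := by exact_mod_cast h2
    have h5 : a.num < 1 := by exact_mod_cast h3
    omega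

/-- counting: a subset of `range N` whose elements are pairwise congruent mod `f`
has at most `N/f` elements (times f). -/
lemma card_mul_le_of_mod (f N : ℕ) (hf : 0 < f) (hfN : f ∣ N) (s : Finset ℕ)
    (hs : s ⊆ Finset.range N)
    (hmod : ∀ a ∈ s, ∀ b ∈ s, (f : ℤ) ∣ (a : ℤ) - (b : ℤ)) :
    f * s.card ≤ N := by
  have hcard : s.card ≤ N / f := by
    calc s.card ≤ (Finset.range (N / f)).card := ?_
      _ = N / f := Finset.card_range _
    apply Finset.card_le_card_of_injOn (fun t => t / f)
    · intro t ht
      simp only [Finset.coe_range, Set.mem_Iio, Finset.mem_coe, Finset.mem_range]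
      rw [Nat.div_lt_iff_lt_mul hf]
      have : t < N := Finset.mem_range.mp (hs ht)
      calc t < N := this
        _ = N / f * f := (Nat.div_mul_cancel hfN).symm
    · intro x hx y hy hxy
      simp only [Finset.mem_coe] at hx hy
      have hd : (f : ℤ) ∣ (x : ℤ) - (y : ℤ) := hmod x hx y hy
      have hxmod : x % f = y % f := by
        obtain ⟨m, hm⟩ := hd
        have : (x : ℤ) = y + f * m := by linarith
        have h2 : ((x : ℤ)) % f = ((y : ℤ) + f * m) % f := by rw [this]
        rw [Int.add_mul_emod_self_left] at h2
        have : ((x % f : ℕ) : ℤ) = ((y % f : ℕ) : ℤ) := by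
          push_cast
          exact h2
        exact_mod_cast this
      simp only at hxy
      calc x = f * (x / f) + x % f := (Nat.div_add_mod x f).symm
        _ = f * (y / f) + y % f := by rw [hxy, hxmod]
        _ = y := Nat.div_add_mod y f
  calc f * s.card ≤ f * (N / f) := Nat.mul_le_mul_left f hcard
    _ = N := Nat.mul_div_cancel' hfN

/-- Covering lemma: if two moduli e₁ e₂ cover the whole AP {a + 6Dt},
with a ≡ 1 mod 6, then one of them divides both a and D, and is coprime to 6. -/
lemma cover_lemma (e₁ e₂ : ℕ) (he₁ : 2 ≤ e₁) (he₂ : 2 ≤ e₂) (D : ℕ) (hD : 0 < D)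
    (a : ℤ) (ha : a % 6 = 1)
    (H : ∀ t : ℤ, (e₁ : ℤ) ∣ a + 6 * D * t ∨ (e₂ : ℤ) ∣ a + 6 * D * t) :
    ∃ e : ℕ, (e = e₁ ∨ e = e₂) ∧ (e : ℤ) ∣ a ∧ e ∣ D ∧ ¬ 2 ∣ e ∧ ¬ 3 ∣ e := by
  by_contra hcon
  set N := e₁ * e₂ with hN
  have hNpos : 0 < N := by positivity
  have key : ∀ e : ℕ, 2 ≤ e → e ∣ N →
      ¬((e : ℤ) ∣ a ∧ e ∣ D ∧ ¬ 2 ∣ e ∧ ¬ 3 ∣ e) →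
      5 * ((Finset.range N).filter (fun t : ℕ => (e:ℤ) ∣ a + 6 * D * t)).card ≤ N := by
    intro e he heN hne
    set s := (Finset.range N).filter (fun t : ℕ => (e:ℤ) ∣ a + 6 * D * t) with hs
    rcases Finset.eq_empty_or_nonempty s with hemp | ⟨t₀, ht₀⟩
    · rw [hemp]; simpa using Nat.zero_le N
    · have ht₀d : (e:ℤ) ∣ a + 6 * D * t₀ := (Finset.mem_filter.mp ht₀).2
      have h2e : ¬ 2 ∣ e := by
        intro h2
        have h2z : (2:ℤ) ∣ (e:ℤ) := by exact_mod_cast Int.natCast_dvd_natCast.mpr h2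
        have h2a : (2:ℤ) ∣ a := by
          have h6 : (2:ℤ) ∣ 6 * D * t₀ := ⟨3 * D * t₀, by ring⟩
          have hd := dvd_sub (h2z.trans ht₀d) h6
          simpa using hd
        omega
      have h3e : ¬ 3 ∣ e := by
        intro h3
        have h3z : (3:ℤ) ∣ (e:ℤ) := by exact_mod_cast Int.natCast_dvd_natCast.mpr h3
        have h3a : (3:ℤ) ∣ a := by
          have h6 : (3:ℤ) ∣ 6 * D * t₀ := ⟨2 * D * t₀, by ring⟩
          have hd := dvd_sub (h3z.trans ht₀d) h6
          simpa using hd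
        omega
      have hcop6 : Nat.Coprime e 6 := by
        have c2 : Nat.Coprime 2 e := (Nat.Prime.coprime_iff_not_dvd Nat.prime_two).mpr h2e
        have c3 : Nat.Coprime 3 e := (Nat.Prime.coprime_iff_not_dvd Nat.prime_three).mpr h3e
        have c6 : Nat.Coprime 6 e := by
          have := Nat.Coprime.mul (k := e) c2 c3
          exact this
        exact c6.symm
      set g := Nat.gcd e (6 * D) with hgdef
      have hg0 : 0 < g := Nat.gcd_pos_of_pos_left _ (by omega)
      have hge : g ∣ e := Nat.gcd_dvd_left _ _
      have hg6D : g ∣ 6 * D := Nat.gcd_dvd_right _ _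
      set f := e / g with hfdef
      have hfg : f * g = e := Nat.div_mul_cancel hge
      have hf0 : 0 < f := Nat.div_pos (Nat.le_of_dvd (by omega) hge) hg0
      by_cases hf1 : f = 1
      · exfalso
        have heg : e = g := by rw [← hfg, hf1, one_mul]
        have he6D : e ∣ 6 * D := heg ▸ hg6D
        have heD : e ∣ D := hcop6.dvd_of_dvd_mul_left he6D
        have hea : (e:ℤ) ∣ a := by
          have h0 : (e:ℤ) ∣ ((6 * D : ℕ) : ℤ) := Int.natCast_dvd_natCast.mpr he6D
          have hcast : ((6 * D : ℕ) : ℤ) = 6 * (D:ℤ) := by push_cast; ring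
          rw [hcast] at h0
          have h1 : (e:ℤ) ∣ 6 * (D:ℤ) * (t₀:ℤ) := h0.mul_right _
          have hd := dvd_sub ht₀d h1
          simpa using hd
        exact hne ⟨hea, heD, h2e, h3e⟩
      · have hf2 : 2 ≤ f := by omega
        have hfe : f ∣ e := ⟨g, hfg.symm⟩
        have hf2d : ¬ 2 ∣ f := fun hd => h2e (hd.trans hfe)
        have hf3d : ¬ 3 ∣ f := fun hd => h3e (hd.trans hfe)
        have hf5 : 5 ≤ f := by
          rcases Nat.lt_or_ge f 5 with h5 | h5
          · exfalso
            interval_cases f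
            · exact hf2d (by norm_num)
            · exact hf3d (by norm_num)
            · exact hf2d (by norm_num)
          · exact h5
        have hfN : f ∣ N := hfe.trans heN
        have hmod : ∀ x ∈ s, ∀ y ∈ s, (f:ℤ) ∣ (x:ℤ) - (y:ℤ) := by
          intro x hx y hy
          have hxd : (e:ℤ) ∣ a + 6 * D * x := (Finset.mem_filter.mp hx).2
          have hyd : (e:ℤ) ∣ a + 6 * D * y := (Finset.mem_filter.mp hy).2
          have hsub : (e:ℤ) ∣ 6 * (D:ℤ) * ((x:ℤ) - y) := by
            have hd := dvd_sub hxd hyd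
            have h2 : a + 6 * D * (x:ℤ) - (a + 6 * D * (y:ℤ)) = 6 * (D:ℤ) * ((x:ℤ) - y) := by
              ring
            rwa [h2] at hd
          set u := 6 * D / g with hudef
          have hug : g * u = 6 * D := Nat.mul_div_cancel' hg6D
          have hfu : Nat.Coprime f u := Nat.coprime_div_gcd_div_gcd (m := e) (n := 6 * D) hg0
          have hsub2 : ((f:ℤ) * (g:ℤ)) ∣ ((g:ℤ) * (u:ℤ)) * ((x:ℤ) - y) := by
            have h1 : ((f:ℤ) * (g:ℤ)) = (e:ℤ) := by exact_mod_cast hfg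
            have h2 : ((g:ℤ) * (u:ℤ)) = 6 * (D:ℤ) := by
              have hcast : ((g * u : ℕ) : ℤ) = ((6 * D : ℕ) : ℤ) := by exact_mod_cast hug
              push_cast at hcast
              linarith
            rw [h1, h2]
            exact hsub
          have hgz : (g : ℤ) ≠ 0 := by exact_mod_cast hg0.ne'
          have hsub3 : (f : ℤ) ∣ (u : ℤ) * ((x:ℤ) - y) := by
            rcases hsub2 with ⟨w, hw⟩
            refine ⟨w, mul_left_cancel₀ hgz ?_⟩
            nlinarith [hw]
          have hgcd1 : Int.gcd (f:ℤ) (u:ℤ) = 1 := by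
            simpa [Int.gcd] using hfu
          exact Int.dvd_of_dvd_mul_right_of_gcd_one hsub3 hgcd1
        have hcard := card_mul_le_of_mod f N (by omega) hfN s (Finset.filter_subset _ _) hmod
        calc 5 * s.card ≤ f * s.card := Nat.mul_le_mul_right _ hf5
          _ ≤ N := hcard
  have hsub : Finset.range N ⊆
      ((Finset.range N).filter (fun t : ℕ => (e₁:ℤ) ∣ a + 6 * D * t)) ∪
      ((Finset.range N).filter (fun t : ℕ => (e₂:ℤ) ∣ a + 6 * D * t)) := by
    intro t ht
    rcases H (t : ℤ) with hd | hd
    · exact Finset.mem_union_left _ (Finset.mem_filter.mpr ⟨ht, hd⟩)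
    · exact Finset.mem_union_right _ (Finset.mem_filter.mpr ⟨ht, hd⟩)
  have hcount : N ≤
      ((Finset.range N).filter (fun t : ℕ => (e₁:ℤ) ∣ a + 6 * D * t)).card +
      ((Finset.range N).filter (fun t : ℕ => (e₂:ℤ) ∣ a + 6 * D * t)).card := by
    calc N = (Finset.range N).card := (Finset.card_range N).symm
      _ ≤ _ := le_trans (Finset.card_le_card hsub) (Finset.card_union_le _ _)
  have h1 := key e₁ he₁ (dvd_mul_right _ _)
    (fun hr => hcon ⟨e₁, Or.inl rfl, hr.1, hr.2.1, hr.2.2.1, hr.2.2.2⟩)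
  have h2 := key e₂ he₂ (dvd_mul_left _ _)
    (fun hr => hcon ⟨e₂, Or.inr rfl, hr.1, hr.2.1, hr.2.2.1, hr.2.2.2⟩)
  omega

/-- fract ((m + θ)/D) = ((m % D) + θ)/D for 0 ≤ θ < 1. -/
lemma fract_int_add_div (m : ℤ) (θ : ℚ) (hθ0 : 0 ≤ θ) (hθ1 : θ < 1) (D : ℕ) (hD : 0 < D) :
    Int.fract (((m : ℚ) + θ) / (D : ℚ)) = (((m % (D:ℤ) : ℤ) : ℚ) + θ) / (D : ℚ) := by
  have hDQ : (0:ℚ) < (D : ℚ) := by exact_mod_cast hD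
  have h0 : ((D:ℚ)) * ((m / (D:ℤ) : ℤ) : ℚ) + ((m % (D:ℤ) : ℤ) : ℚ) = (m : ℚ) := by
    exact_mod_cast (Int.mul_ediv_add_emod m (D:ℤ))
  have key : ((m : ℚ) + θ) / (D : ℚ) = ((m / (D:ℤ) : ℤ) : ℚ) + (((m % (D:ℤ) : ℤ) : ℚ) + θ) / (D : ℚ) := by
    rw [← h0]
    field_simp
    ring
  rw [key, Int.fract_intCast_add, Int.fract_eq_self.mpr ?_]
  constructor
  · apply div_nonneg _ hDQ.le
    have : (0:ℚ) ≤ ((m % (D:ℤ) : ℤ) : ℚ) := by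
      exact_mod_cast Int.emod_nonneg m (by exact_mod_cast hD.ne')
    linarith
  · rw [div_lt_one hDQ]
    have : ((m % (D:ℤ) : ℤ) : ℚ) < (D : ℚ) := by
      exact_mod_cast Int.emod_lt_of_pos m (by exact_mod_cast hD)
    have : ((m % (D:ℤ) : ℤ) : ℚ) ≤ (D:ℚ) - 1 := by
      have h2 : (m % (D:ℤ)) ≤ (D:ℤ) - 1 := by
        have := Int.emod_lt_of_pos m (show (0:ℤ) < (D:ℤ) by exact_mod_cast hD)
        omega
      exact_mod_cast h2
    linarith

lemma five_le_of_not_two_three (e : ℕ) (h2 : 2 ≤ e) (hn2 : ¬ 2 ∣ e) (hn3 : ¬ 3 ∣ e) :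
    5 ≤ e := by
  rcases Nat.lt_or_ge e 5 with h5 | h5
  · exfalso
    interval_cases e
    · exact hn2 (by norm_num)
    · exact hn3 (by norm_num)
    · exact hn2 (by norm_num)
  · exact h5

lemma int_eq_of_dvd_of_bounds {D x y : ℤ} (hD : 0 < D) (hx : 0 ≤ x) (hxD : x < D)
    (hy : 0 ≤ y) (hyD : y < D) (h : D ∣ x - y) : x = y := by
  have habs : |x - y| < D := by
    rw [abs_lt]
    omega
  have := Int.eq_zero_of_abs_lt_dvd h habs
  omega

/-- The main zone lemma. -/
lemma zone_lemma (T l r : ℚ) (hlen : r - l < 1/3) (h6T : Int.fract (6*T) ≠ 0)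
    (e₁ e₂ : ℕ) (he₁ : 2 ≤ e₁) (he₂ : 2 ≤ e₂)
    (H : ∀ k : ℤ, ¬((e₁:ℤ) ∣ (1+6*k)) → ¬((e₂:ℤ) ∣ (1+6*k)) →
         l ≤ Int.fract (((1+6*k : ℤ):ℚ)*T) ∧ Int.fract (((1+6*k : ℤ):ℚ)*T) ≤ r) :
    False := by
  classical
  set v : ℤ → ℚ := fun k => Int.fract (((1+6*k : ℤ):ℚ)*T) with hvdef
  set η := Int.fract (6*T) with hηdef
  set D := η.den with hDdef
  have hDpos : 0 < D := η.den_pos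
  have hη0 : 0 ≤ η := Int.fract_nonneg _
  have hη1 : η < 1 := Int.fract_lt_one _
  have hDQ : (0:ℚ) < (D:ℚ) := by exact_mod_cast hDpos
  have hD2 : 2 ≤ D := by
    by_contra hcon
    have hD1 : D = 1 := by omega
    have hnum : (η.num : ℚ) = η := by
      have hh := Rat.num_div_den η
      rw [hDdef] at hD1
      rw [hD1] at hh
      simpa using hh
    have h1 : (0:ℚ) ≤ (η.num : ℚ) := by rw [hnum]; exact hη0
    have h2 : (η.num : ℚ) < 1 := by rw [hnum]; exact hη1
    have h3 : (0:ℤ) ≤ η.num := by exact_mod_cast h1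
    have h4 : η.num < 1 := by exact_mod_cast h2
    have h5 : η.num = 0 := by omega
    exact h6T (by rw [← hnum, h5]; simp)
  set p := η.num with hpdef
  have hcopr : Nat.Coprime p.natAbs D := η.reduced
  set c := Int.fract T with hcdef
  set θ := Int.fract (c * (D:ℚ)) with hθdef
  set q' := ⌊c * (D:ℚ)⌋ with hq'def
  have hθ0 : 0 ≤ θ := Int.fract_nonneg _
  have hθ1 : θ < 1 := Int.fract_lt_one _
  have hcD : c * (D:ℚ) = (q' : ℚ) + θ := by
    have hh := Int.self_sub_floor (c * (D:ℚ))
    rw [← hθdef] at hh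
    rw [← hq'def] at hh
    linarith
  have hηpD : η = (p:ℚ)/(D:ℚ) := by
    rw [hpdef, hDdef]
    exact (Rat.num_div_den η).symm
  have hval : ∀ k : ℤ, v k = ((((q' + k*p) % (D:ℤ) : ℤ) : ℚ) + θ) / (D:ℚ) := by
    intro k
    have step1 : ((1+6*k : ℤ):ℚ)*T = (c + (k:ℚ)*η) + ((⌊T⌋ + k*⌊6*T⌋ : ℤ):ℚ) := by
      have h1 : c = T - ⌊T⌋ := by rw [hcdef, ← Int.self_sub_floor]
      have h2 : η = 6*T - ⌊6*T⌋ := by rw [hηdef, ← Int.self_sub_floor]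
      rw [h1, h2]; push_cast; ring
    have step3 : c + (k:ℚ)*η = (((q' + k*p : ℤ):ℚ) + θ)/(D:ℚ) := by
      rw [hηpD]
      calc c + (k:ℚ)*((p:ℚ)/(D:ℚ)) = (c*(D:ℚ) + (k:ℚ)*(p:ℚ))/(D:ℚ) := by
            field_simp
          _ = (((q':ℚ) + θ) + (k:ℚ)*(p:ℚ))/(D:ℚ) := by rw [hcD]
          _ = (((q' + k*p : ℤ):ℚ) + θ)/(D:ℚ) := by push_cast; ring_nf
    show Int.fract (((1+6*k : ℤ):ℚ)*T) = _
    rw [step1, Int.fract_add_intCast, step3, fract_int_add_div _ _ hθ0 hθ1 _ hDpos]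
  have hper : ∀ k t : ℤ, v (k + D*t) = v k := by
    intro k t
    rw [hval, hval]
    have hmm : (q' + (k + (D:ℤ)*t)*p) % (D:ℤ) = (q' + k*p) % (D:ℤ) := by
      have hexp : q' + (k + (D:ℤ)*t)*p = (q' + k*p) + (D:ℤ)*(t*p) := by ring
      rw [hexp, Int.add_mul_emod_self_left]
    rw [hmm]
  set idx : ℕ → ℤ := fun k => (q' + (k:ℤ)*p) % (D:ℤ) with hidxdef
  have hidx0 : ∀ k : ℕ, 0 ≤ idx k := fun k => Int.emod_nonneg _ (by exact_mod_cast hDpos.ne')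
  have hidxD : ∀ k : ℕ, idx k < (D:ℤ) := fun k => Int.emod_lt_of_pos _ (by exact_mod_cast hDpos)
  have hinj : ∀ x ∈ Finset.range D, ∀ y ∈ Finset.range D, idx x = idx y → x = y := by
    intro x hx y hy hxy
    have hmodeq : Int.ModEq (D:ℤ) (q' + (x:ℤ)*p) (q' + (y:ℤ)*p) := hxy
    have hdvd0 : (D:ℤ) ∣ (q' + (y:ℤ)*p) - (q' + (x:ℤ)*p) := hmodeq.dvd
    have hdvd : (D:ℤ) ∣ ((y:ℤ) - (x:ℤ)) * p := by
      have hexp : (q' + (y:ℤ)*p) - (q' + (x:ℤ)*p) = ((y:ℤ) - (x:ℤ)) * p := by ring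
      rwa [hexp] at hdvd0
    have hgcd : Int.gcd (D:ℤ) p = 1 := by
      simpa [Int.gcd, Nat.coprime_comm] using hcopr
    have hmul : (D:ℤ) ∣ p * ((y:ℤ) - (x:ℤ)) := by
      rw [mul_comm]
      exact hdvd
    have hdvd2 : (D:ℤ) ∣ ((y:ℤ) - (x:ℤ)) :=
      Int.dvd_of_dvd_mul_right_of_gcd_one hmul hgcd
    have hxD' : (x:ℤ) < (D:ℤ) := by exact_mod_cast Finset.mem_range.mp hx
    have hyD' : (y:ℤ) < (D:ℤ) := by exact_mod_cast Finset.mem_range.mp hy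
    have : (y:ℤ) = (x:ℤ) := by
      apply int_eq_of_dvd_of_bounds (show (0:ℤ) < D by exact_mod_cast hDpos)
        (by positivity) hyD' (by positivity) hxD' hdvd2
    exact_mod_cast this.symm
  set NV := (Finset.range D).filter (fun k : ℕ => l ≤ v k ∧ v k ≤ r) with hNVdef
  set V := (Finset.range D).filter (fun k : ℕ => ¬ (l ≤ v k ∧ v k ≤ r)) with hVdef
  have hcards : NV.card + V.card = D := by
    rw [hNVdef, hVdef]
    rw [Finset.card_filter_add_card_filter_not]
    exact Finset.card_range D
  set Z := (Finset.range D).filter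
      (fun i : ℕ => l ≤ ((i:ℚ)+θ)/(D:ℚ) ∧ ((i:ℚ)+θ)/(D:ℚ) ≤ r) with hZdef
  have hNVZ : NV.card ≤ Z.card := by
    apply Finset.card_le_card_of_injOn (fun k => (idx k).toNat)
    · intro k hk
      obtain ⟨hkr, hkz⟩ := Finset.mem_filter.mp hk
      have hvk : v (k:ℤ) = (((idx k : ℤ):ℚ) + θ)/(D:ℚ) := hval (k:ℤ)
      have hcast : (((idx k).toNat : ℕ) : ℚ) = ((idx k : ℤ) : ℚ) := by
        exact_mod_cast congrArg (fun z : ℤ => (z : ℚ)) (Int.toNat_of_nonneg (hidx0 k))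
      refine Finset.mem_filter.mpr ⟨?_, ?_⟩
      · rw [Finset.mem_range]
        have := hidxD k
        have h0 := hidx0 k
        beta_reduce
        omega
      · rw [hcast, ← hvk]
        exact hkz
    · intro x hx y hy hxy
      simp only [Finset.mem_coe] at hx hy
      have hxy' : (idx x).toNat = (idx y).toNat := hxy
      have h0x := hidx0 x
      have h0y := hidx0 y
      exact hinj x (Finset.mem_filter.mp hx).1 y (Finset.mem_filter.mp hy).1 (by omega)
  have hZbound : (Z.card : ℚ) < (D:ℚ)/3 + 1 := by
    have hDrl : (D:ℚ)*(r-l) < (D:ℚ)/3 := by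
      calc (D:ℚ)*(r-l) < (D:ℚ)*(1/3) := by
            apply mul_lt_mul_of_pos_left hlen hDQ
        _ = (D:ℚ)/3 := by ring
    rcases le_or_gt l r with hlr | hlr
    · have hmap : Z.card ≤ (Finset.Icc ⌈(D:ℚ)*l-θ⌉ ⌊(D:ℚ)*r-θ⌋).card := by
        refine Finset.card_le_card_of_injOn (s := Z)
          (t := Finset.Icc ⌈(D:ℚ)*l-θ⌉ ⌊(D:ℚ)*r-θ⌋) (fun i => ((i:ℕ):ℤ)) ?_ ?_
        · intro i hi
          obtain ⟨hir, hil, hiu⟩ := Finset.mem_filter.mp hi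
          simp only [Finset.coe_Icc, Set.mem_Icc, Finset.mem_coe, Finset.mem_Icc]
          constructor
          · rw [Int.ceil_le]
            push_cast
            rw [le_div_iff₀ hDQ] at hil
            linarith
          · rw [Int.le_floor]
            push_cast
            rw [div_le_iff₀ hDQ] at hiu
            linarith
        · intro x _ y _ hxy
          have hxy' : ((x:ℕ):ℤ) = ((y:ℕ):ℤ) := hxy
          exact_mod_cast hxy'
      have hicc : ((Finset.Icc ⌈(D:ℚ)*l-θ⌉ ⌊(D:ℚ)*r-θ⌋).card : ℚ) ≤ (D:ℚ)*(r-l) + 1 := by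
        rw [Int.card_Icc]
        rcases le_or_gt (⌈(D:ℚ)*l-θ⌉ : ℤ) ⌊(D:ℚ)*r-θ⌋ with hle | hlt
        · have h1 : ((⌊(D:ℚ)*r-θ⌋ : ℤ) : ℚ) ≤ (D:ℚ)*r-θ := Int.floor_le _
          have h2 : (D:ℚ)*l-θ ≤ ((⌈(D:ℚ)*l-θ⌉ : ℤ) : ℚ) := Int.le_ceil _
          have h3 : (0:ℤ) ≤ ⌊(D:ℚ)*r-θ⌋ + 1 - ⌈(D:ℚ)*l-θ⌉ := by omega
          have hcst : (((⌊(D:ℚ)*r-θ⌋ + 1 - ⌈(D:ℚ)*l-θ⌉).toNat : ℕ) : ℚ)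
              = ((⌊(D:ℚ)*r-θ⌋ + 1 - ⌈(D:ℚ)*l-θ⌉ : ℤ) : ℚ) := by
            exact_mod_cast congrArg (fun z : ℤ => (z : ℚ)) (Int.toNat_of_nonneg h3)
          rw [hcst]
          push_cast
          linarith
        · have h3 : (⌊(D:ℚ)*r-θ⌋ + 1 - ⌈(D:ℚ)*l-θ⌉) ≤ 0 := by omega
          have hcst : (⌊(D:ℚ)*r-θ⌋ + 1 - ⌈(D:ℚ)*l-θ⌉).toNat = 0 := by omega
          rw [hcst]
          have : (0:ℚ) ≤ (D:ℚ)*(r-l) := by nlinarith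
          push_cast
          linarith
      calc (Z.card : ℚ) ≤ (D:ℚ)*(r-l) + 1 := le_trans (by exact_mod_cast hmap) hicc
        _ < (D:ℚ)/3 + 1 := by linarith
    · have hZe : Z = ∅ := by
        apply Finset.filter_false_of_mem
        intro i _
        rintro ⟨h1, h2⟩
        linarith
      rw [hZe]
      simp
      positivity
  have hcover : ∀ k ∈ V, ∃ e : ℕ, (e = e₁ ∨ e = e₂) ∧ (e:ℤ) ∣ (1 + 6*(k:ℤ)) ∧ e ∣ D
      ∧ ¬ 2 ∣ e ∧ ¬ 3 ∣ e := by
    intro k hk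
    have hkviol : ¬ (l ≤ v (k:ℤ) ∧ v (k:ℤ) ≤ r) := (Finset.mem_filter.mp hk).2
    apply cover_lemma e₁ e₂ he₁ he₂ D hDpos (1+6*(k:ℤ)) (by omega)
    intro t
    by_contra hno
    push_neg at hno
    have harg : ∀ e : ℕ, ((e:ℤ) ∣ 1 + 6*((k:ℤ) + D*t)) ↔ ((e:ℤ) ∣ 1 + 6*(k:ℤ) + 6*D*t) := by
      intro e
      constructor <;> intro hh <;> [skip; skip] <;>
        · have hre : 1 + 6*((k:ℤ) + (D:ℤ)*t) = 1 + 6*(k:ℤ) + 6*(D:ℤ)*t := by ring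
          first
          | (rwa [hre] at hh)
          | (rwa [← hre] at hh)
    have hz := H ((k:ℤ) + D*t) (fun hd => hno.1 ((harg e₁).mp hd)) (fun hd => hno.2 ((harg e₂).mp hd))
    have hzk : l ≤ v ((k:ℤ) + D*t) ∧ v ((k:ℤ) + D*t) ≤ r := hz
    rw [hper (k:ℤ) t] at hzk
    exact hkviol hzk
  set A : ℕ → Finset ℕ := fun e => (Finset.range D).filter
      (fun k => (e:ℤ) ∣ (1+6*(k:ℤ)) ∧ e ∣ D ∧ ¬ 2 ∣ e ∧ ¬ 3 ∣ e) with hAdef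
  have hVsub : V ⊆ A e₁ ∪ A e₂ := by
    intro k hk
    obtain ⟨e, hee, h1, h2, h3, h4⟩ := hcover k hk
    have hkr : k ∈ Finset.range D := (Finset.mem_filter.mp hk).1
    rcases hee with rfl | rfl
    · exact Finset.mem_union_left _ (Finset.mem_filter.mpr ⟨hkr, h1, h2, h3, h4⟩)
    · exact Finset.mem_union_right _ (Finset.mem_filter.mpr ⟨hkr, h1, h2, h3, h4⟩)
  have hAcard : ∀ e : ℕ, 2 ≤ e → 5 * (A e).card ≤ D := by
    intro e he
    rcases Finset.eq_empty_or_nonempty (A e) with hemp | ⟨k₀, hk₀⟩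
    · rw [hemp]; simpa using Nat.zero_le D
    · obtain ⟨hk₀r, hdvd₀, heD, h2e, h3e⟩ := Finset.mem_filter.mp hk₀
      have he5 : 5 ≤ e := five_le_of_not_two_three e he h2e h3e
      have hcop6 : Nat.Coprime e 6 := by
        have c2 : Nat.Coprime 2 e := (Nat.Prime.coprime_iff_not_dvd Nat.prime_two).mpr h2e
        have c3 : Nat.Coprime 3 e := (Nat.Prime.coprime_iff_not_dvd Nat.prime_three).mpr h3e
        exact (Nat.Coprime.mul (k := e) c2 c3).symm
      have hmod : ∀ x ∈ A e, ∀ y ∈ A e, (e:ℤ) ∣ (x:ℤ) - (y:ℤ) := by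
        intro x hx y hy
        have hxd : (e:ℤ) ∣ (1+6*(x:ℤ)) := (Finset.mem_filter.mp hx).2.1
        have hyd : (e:ℤ) ∣ (1+6*(y:ℤ)) := (Finset.mem_filter.mp hy).2.1
        have hgcd : Int.gcd (e:ℤ) (6:ℤ) = 1 := by
          simpa [Int.gcd] using hcop6
        obtain ⟨w, hw⟩ := dvd_sub hxd hyd
        exact Int.dvd_of_dvd_mul_right_of_gcd_one
          (⟨w, by linarith⟩ : (e:ℤ) ∣ 6 * ((x:ℤ) - (y:ℤ))) hgcd
      have hcard := card_mul_le_of_mod e D (by omega) heD (A e)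
        (Finset.filter_subset _ _) hmod
      calc 5 * (A e).card ≤ e * (A e).card := Nat.mul_le_mul_right _ he5
        _ ≤ D := hcard
  have hVA : V.card ≤ (A e₁).card + (A e₂).card :=
    le_trans (Finset.card_le_card hVsub) (Finset.card_union_le _ _)
  have h5A1 := hAcard e₁ he₁
  have h5A2 := hAcard e₂ he₂
  -- V is nonempty
  have hVne : V.Nonempty := by
    rcases Finset.eq_empty_or_nonempty V with hemp | hne
    · exfalso
      have hV0 : V.card = 0 := by rw [hemp]; simp
      have hD_NV : NV.card = D := by omega
      have : (D:ℚ) ≤ (Z.card : ℚ) := by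
        rw [← hD_NV]
        exact_mod_cast hNVZ
      have hfalse : (D:ℚ) < (D:ℚ)/3 + 1 := lt_of_le_of_lt this hZbound
      have : (D:ℚ) ≥ 2 := by exact_mod_cast hD2
      linarith
    · exact hne
  obtain ⟨k₀, hk₀⟩ := hVne
  obtain ⟨e, hee, _, heD, h2e, h3e⟩ := hcover k₀ hk₀
  have he2 : 2 ≤ e := by rcases hee with rfl | rfl <;> assumption
  have he5 : 5 ≤ e := five_le_of_not_two_three e he2 h2e h3e
  have hD5 : 5 ≤ D := le_trans he5 (Nat.le_of_dvd hDpos heD)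
  -- final counting
  have hQ1 : ((A e₁).card : ℚ) ≤ (D:ℚ)/5 := by
    have : ((5 * (A e₁).card : ℕ) : ℚ) ≤ (D:ℚ) := by exact_mod_cast h5A1
    push_cast at this
    linarith
  have hQ2 : ((A e₂).card : ℚ) ≤ (D:ℚ)/5 := by
    have : ((5 * (A e₂).card : ℕ) : ℚ) ≤ (D:ℚ) := by exact_mod_cast h5A2
    push_cast at this
    linarith
  have hQV : (V.card : ℚ) ≤ 2*(D:ℚ)/5 := by
    have : ((V.card : ℕ) : ℚ) ≤ ((A e₁).card : ℚ) + ((A e₂).card : ℚ) := by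
      exact_mod_cast hVA
    linarith
  have hQD : (D:ℚ) = (NV.card : ℚ) + (V.card : ℚ) := by exact_mod_cast hcards.symm
  have hQNV : (NV.card : ℚ) ≤ (Z.card : ℚ) := by exact_mod_cast hNVZ
  have hD5Q : (5:ℚ) ≤ (D:ℚ) := by exact_mod_cast hD5
  linarith

lemma fin4_exists_distinct : ∀ (i₀ i₁ : Fin 4), i₀ ≠ i₁ →
    ∃ i₂ i₃ : Fin 4, i₂ ≠ i₃ ∧ i₂ ≠ i₀ ∧ i₂ ≠ i₁ ∧ i₃ ≠ i₀ ∧ i₃ ≠ i₁ := by decide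

lemma fin4_cases : ∀ (i₀ i₁ i₂ i₃ : Fin 4), i₀ ≠ i₁ → i₀ ≠ i₂ → i₀ ≠ i₃ →
    i₁ ≠ i₂ → i₁ ≠ i₃ → i₂ ≠ i₃ → ∀ i : Fin 4, i = i₀ ∨ i = i₁ ∨ i = i₂ ∨ i = i₃ := by
  decide

lemma sum_four (f : Fin 4 → ℚ) (i₀ i₁ i₂ i₃ : Fin 4)
    (h01 : i₀ ≠ i₁) (h02 : i₀ ≠ i₂) (h03 : i₀ ≠ i₃)
    (h12 : i₁ ≠ i₂) (h13 : i₁ ≠ i₃) (h23 : i₂ ≠ i₃) :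
    ∑ i, f i = f i₀ + f i₁ + f i₂ + f i₃ := by
  have huniv : ({i₀, i₁, i₂, i₃} : Finset (Fin 4)) = Finset.univ := by
    apply Finset.eq_univ_of_card
    rw [Finset.card_insert_of_notMem (by simp [h01, h02, h03]),
        Finset.card_insert_of_notMem (by simp [h12, h13]),
        Finset.card_insert_of_notMem (by simp [h23]),
        Finset.card_singleton]
    simp
  rw [← huniv,
      Finset.sum_insert (by simp [h01, h02, h03]),
      Finset.sum_insert (by simp [h12, h13]),
      Finset.sum_insert (by simp [h23]), Finset.sum_singleton]
  ring

lemma fract_half (k : ℤ) : Int.fract (((1+6*k : ℤ):ℚ) * (1/2)) = 1/2 := by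
  have hkk : ((1+6*k : ℤ):ℚ) * (1/2) = ((3*k : ℤ):ℚ) + 1/2 := by push_cast; ring
  rw [hkk, Int.fract_intCast_add, Int.fract_eq_self.mpr (by norm_num)]

lemma fract_third (k : ℤ) : Int.fract (((1+6*k : ℤ):ℚ) * (1/3)) = 1/3 := by
  have hkk : ((1+6*k : ℤ):ℚ) * (1/3) = ((2*k : ℤ):ℚ) + 1/3 := by push_cast; ring
  rw [hkk, Int.fract_intCast_add, Int.fract_eq_self.mpr (by norm_num)]

lemma fract_two_third (k : ℤ) : Int.fract (((1+6*k : ℤ):ℚ) * (2/3)) = 2/3 := by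
  have hkk : ((1+6*k : ℤ):ℚ) * (2/3) = ((4*k : ℤ):ℚ) + 2/3 := by push_cast; ring
  rw [hkk, Int.fract_intCast_add, Int.fract_eq_self.mpr (by norm_num)]

end Stmt4Aux

/-- If v₁,...,v₄ ∈ (0,1) are rationals and α_n := Σᵢ (1 + n vᵢ - ⌈n vᵢ⌉) satisfies
α_n ≥ α_1 for all integers n, then α_1 ∉ (11/6, 2). -/
theorem stmt_4 (v : Fin 4 → ℚ) (hv : ∀ i, 0 < v i ∧ v i < 1)
    (α : ℤ → ℚ) (hα : ∀ n : ℤ, α n = ∑ i, (1 + (n : ℚ) * v i - (⌈(n : ℚ) * v i⌉ : ℚ)))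
    (h : ∀ n : ℤ, α 1 ≤ α n) :
    ¬ (11 / 6 < α 1 ∧ α 1 < 2) := by
  open Stmt4Aux in
  rintro ⟨hl, hr⟩
  classical
  obtain ⟨x, hxdef⟩ : ∃ x : Fin 4 → ℚ, ∀ i, x i = 1 - v i :=
    ⟨fun i => 1 - v i, fun _ => rfl⟩
  have hx0 : ∀ i, 0 < x i := by
    intro i
    have := (hv i).2
    rw [hxdef i]
    linarith
  have hx1 : ∀ i, x i < 1 := by
    intro i
    have := (hv i).1
    rw [hxdef i]
    linarith
  obtain ⟨S, hSdef⟩ : ∃ S : ℚ, S = ∑ i, x i := ⟨_, rfl⟩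
  have hαx : ∀ n : ℤ, α n = 4 - ∑ i, Int.fract ((n:ℚ) * x i) := by
    intro n
    rw [hα n]
    have hpt : ∀ i : Fin 4, (1 + (n:ℚ) * v i - (⌈(n:ℚ) * v i⌉ : ℚ))
        = 1 - Int.fract ((n:ℚ) * x i) := by
      intro i
      have h1 : (n:ℚ) * x i = -((n:ℚ) * v i) + ((n : ℤ) : ℚ) := by
        rw [hxdef i]
        push_cast
        ring
      rw [h1, Int.fract_add_intCast]
      have h2 : Int.fract (-((n:ℚ) * v i)) = -((n:ℚ) * v i) + (⌈(n:ℚ) * v i⌉ : ℚ) := by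
        rw [← Int.self_sub_floor, Int.floor_neg]
        push_cast
        ring
      rw [h2]
      ring
    rw [Finset.sum_congr rfl (fun i _ => hpt i), Finset.sum_sub_distrib]
    simp
  have hα1 : α 1 = 4 - S := by
    rw [hαx 1, hSdef]
    congr 1
    apply Finset.sum_congr rfl
    intro i _
    have h1 : (((1:ℤ)):ℚ) * x i = x i := by norm_num
    rw [h1, Int.fract_eq_self.mpr ⟨(hx0 i).le, hx1 i⟩]
  have hS1 : 2 < S := by rw [hα1] at hr; linarith
  have hS2 : S < 13/6 := by rw [hα1] at hl; linarith
  have Hβ : ∀ n : ℤ, (∑ i, Int.fract ((n:ℚ) * x i)) ≤ S := by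
    intro n
    have hh := h n
    rw [hαx n, hα1] at hh
    linarith
  -- Step B1 : some coordinate equals 1/2
  have hB1 : ∃ i, x i = 1/2 := by
    by_contra hno
    push_neg at hno
    have hfr : ∀ i, Int.fract (2 * x i) ≠ 0 := by
      intro i h0
      have h2x : 2 * x i = (⌊2 * x i⌋ : ℚ) := by
        have hh := Int.self_sub_floor (2 * x i)
        rw [h0] at hh
        linarith
      have hb1 : (0:ℚ) < (⌊2 * x i⌋ : ℚ) := by rw [← h2x]; linarith [hx0 i]
      have hb2 : (⌊2 * x i⌋ : ℚ) < 2 := by rw [← h2x]; linarith [hx1 i]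
      have hz1 : 0 < ⌊2 * x i⌋ := by exact_mod_cast hb1
      have hz2 : ⌊2 * x i⌋ < 2 := by exact_mod_cast hb2
      have hz : ⌊2 * x i⌋ = 1 := by omega
      apply hno i
      rw [hz] at h2x
      push_cast at h2x
      linear_combination h2x / 2
    set m := ∑ i, ⌊2 * x i⌋ with hm
    have hsum2 : ∑ i, Int.fract (2 * x i) = 2*S - (m:ℚ) := by
      have hterm : ∀ i : Fin 4, Int.fract (2 * x i) = 2 * x i - (⌊2 * x i⌋ : ℚ) :=
        fun i => (Int.self_sub_floor (2 * x i)).symm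
      rw [Finset.sum_congr rfl (fun i _ => hterm i), Finset.sum_sub_distrib]
      rw [hSdef, hm]
      rw [← Finset.mul_sum]
      push_cast
      ring
    have hup := Hβ 2
    have hcast2 : ∀ i : Fin 4, Int.fract (((2:ℤ):ℚ) * x i) = Int.fract (2 * x i) := by
      intro i; norm_num
    rw [Finset.sum_congr rfl (fun i _ => hcast2 i), hsum2] at hup
    have hdn := Hβ (-2)
    have hcastn2 : ∀ i : Fin 4, Int.fract (((-2:ℤ):ℚ) * x i) = 1 - Int.fract (2 * x i) := by
      intro i
      have hexp : ((-2:ℤ):ℚ) * x i = -(2 * x i) := by push_cast; ring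
      rw [hexp, Int.fract_neg (hfr i)]
    rw [Finset.sum_congr rfl (fun i _ => hcastn2 i), Finset.sum_sub_distrib, hsum2] at hdn
    simp only [Finset.sum_const, Finset.card_univ, Fintype.card_fin, nsmul_eq_mul] at hdn
    norm_num at hdn
    have hm3 : (2:ℚ) < (m:ℚ) := by linarith
    have hm52 : (m:ℚ) < 5/2 := by linarith
    have hmi : (2:ℤ) < m := by exact_mod_cast hm3
    have hmi3 : (3:ℚ) ≤ (m:ℚ) := by exact_mod_cast hmi
    linarith
  -- Step B2 : some coordinate has 3x integral
  have hB2 : ∃ i, Int.fract (3 * x i) = 0 := by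
    by_contra hno
    push_neg at hno
    set s := ∑ i, ⌊3 * x i⌋ with hs
    have hsum3 : ∑ i, Int.fract (3 * x i) = 3*S - (s:ℚ) := by
      have hterm : ∀ i : Fin 4, Int.fract (3 * x i) = 3 * x i - (⌊3 * x i⌋ : ℚ) :=
        fun i => (Int.self_sub_floor (3 * x i)).symm
      rw [Finset.sum_congr rfl (fun i _ => hterm i), Finset.sum_sub_distrib]
      rw [hSdef, hs]
      rw [← Finset.mul_sum]
      push_cast
      ring
    have hup := Hβ 3
    have hcast3 : ∀ i : Fin 4, Int.fract (((3:ℤ):ℚ) * x i) = Int.fract (3 * x i) := by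
      intro i; norm_num
    rw [Finset.sum_congr rfl (fun i _ => hcast3 i), hsum3] at hup
    have hdn := Hβ (-3)
    have hcastn3 : ∀ i : Fin 4, Int.fract (((-3:ℤ):ℚ) * x i) = 1 - Int.fract (3 * x i) := by
      intro i
      have hexp : ((-3:ℤ):ℚ) * x i = -(3 * x i) := by push_cast; ring
      rw [hexp, Int.fract_neg (hno i)]
    rw [Finset.sum_congr rfl (fun i _ => hcastn3 i), Finset.sum_sub_distrib, hsum3] at hdn
    simp only [Finset.sum_const, Finset.card_univ, Fintype.card_fin, nsmul_eq_mul] at hdn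
    norm_num at hdn
    have hs4 : (4:ℚ) < (s:ℚ) := by linarith
    have hs143 : (s:ℚ) < 14/3 := by linarith
    have hsi : (4:ℤ) < s := by exact_mod_cast hs4
    have hsi5 : (5:ℚ) ≤ (s:ℚ) := by exact_mod_cast hsi
    linarith
  obtain ⟨i₀, hi₀⟩ := hB1
  obtain ⟨i₁, hfr3⟩ := hB2
  have hx13 : x i₁ = 1/3 ∨ x i₁ = 2/3 := by
    have h3x : 3 * x i₁ = (⌊3 * x i₁⌋ : ℚ) := by
      have hh := Int.self_sub_floor (3 * x i₁)
      rw [hfr3] at hh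
      linarith
    have hb1 : (0:ℚ) < (⌊3 * x i₁⌋ : ℚ) := by rw [← h3x]; linarith [hx0 i₁]
    have hb2 : (⌊3 * x i₁⌋ : ℚ) < 3 := by rw [← h3x]; linarith [hx1 i₁]
    have hz1 : 0 < ⌊3 * x i₁⌋ := by exact_mod_cast hb1
    have hz2 : ⌊3 * x i₁⌋ < 3 := by exact_mod_cast hb2
    rcases (by omega : ⌊3 * x i₁⌋ = 1 ∨ ⌊3 * x i₁⌋ = 2) with hz | hz
    · left
      rw [hz] at h3x
      push_cast at h3x
      linear_combination h3x / 3
    · right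
      rw [hz] at h3x
      push_cast at h3x
      linear_combination h3x / 3
  have hne01 : i₀ ≠ i₁ := by
    intro he
    rw [he] at hi₀
    rcases hx13 with hc | hc <;> rw [hi₀] at hc <;> norm_num at hc
  obtain ⟨i₂, i₃, h23, h20, h21, h30, h31⟩ := fin4_exists_distinct i₀ i₁ hne01
  have hsum4 : ∀ f : Fin 4 → ℚ, ∑ i, f i = f i₀ + f i₁ + f i₂ + f i₃ :=
    fun f => sum_four f i₀ i₁ i₂ i₃ hne01 (Ne.symm h20) (Ne.symm h30) (Ne.symm h21)
      (Ne.symm h31) h23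
  have hcases : ∀ i : Fin 4, i = i₀ ∨ i = i₁ ∨ i = i₂ ∨ i = i₃ :=
    fin4_cases i₀ i₁ i₂ i₃ hne01 (Ne.symm h20) (Ne.symm h30) (Ne.symm h21) (Ne.symm h31) h23
  have hea : 2 ≤ (x i₂).den := two_le_den (x i₂) (hx0 i₂) (hx1 i₂)
  have heb : 2 ≤ (x i₃).den := two_le_den (x i₃) (hx0 i₃) (hx1 i₃)
  have hSval : S = x i₀ + x i₁ + x i₂ + x i₃ := by rw [hSdef]; exact hsum4 x
  -- per-n analysis
  have hmain : ∀ k : ℤ, ¬(((x i₂).den : ℤ) ∣ (1+6*k)) → ¬(((x i₃).den : ℤ) ∣ (1+6*k)) →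
      (4 - S - Int.fract (((1+6*k : ℤ):ℚ) * x i₀) - Int.fract (((1+6*k : ℤ):ℚ) * x i₁)
        ≤ Int.fract (((1+6*k : ℤ):ℚ) * x i₂) + Int.fract (((1+6*k : ℤ):ℚ) * x i₃)) ∧
      (Int.fract (((1+6*k : ℤ):ℚ) * x i₂) + Int.fract (((1+6*k : ℤ):ℚ) * x i₃)
        ≤ S - Int.fract (((1+6*k : ℤ):ℚ) * x i₀) - Int.fract (((1+6*k : ℤ):ℚ) * x i₁)) := by
    intro k hk2 hk3
    have hnz : ∀ i : Fin 4, Int.fract (((1+6*k : ℤ):ℚ) * x i) ≠ 0 := by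
      intro i
      rcases hcases i with hcse | hcse | hcse | hcse <;> rw [hcse]
      · rw [hi₀, fract_half k]; norm_num
      · rcases hx13 with hc | hc
        · rw [hc, fract_third k]; norm_num
        · rw [hc, fract_two_third k]; norm_num
      · exact fun h0 => hk2 ((fract_mul_eq_zero_iff (x i₂) _).mp h0)
      · exact fun h0 => hk3 ((fract_mul_eq_zero_iff (x i₃) _).mp h0)
    have hup := Hβ (1+6*k)
    rw [hsum4 (fun i => Int.fract (((1+6*k : ℤ):ℚ) * x i))] at hup
    have hdn := Hβ (-(1+6*k))
    have hflip : ∀ i : Fin 4, Int.fract (((-(1+6*k) : ℤ):ℚ) * x i)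
        = 1 - Int.fract (((1+6*k : ℤ):ℚ) * x i) := by
      intro i
      have hexp : ((-(1+6*k) : ℤ):ℚ) * x i = -(((1+6*k : ℤ):ℚ) * x i) := by
        push_cast; ring
      rw [hexp, Int.fract_neg (hnz i)]
    rw [Finset.sum_congr rfl (fun i _ => hflip i), Finset.sum_sub_distrib,
      hsum4 (fun i => Int.fract (((1+6*k : ℤ):ℚ) * x i))] at hdn
    simp only [Finset.sum_const, Finset.card_univ, Fintype.card_fin, nsmul_eq_mul] at hdn
    norm_num at hdn
    push_cast at hup hdn ⊢
    constructor
    · linarith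
    · linarith
  -- two cases
  rcases hx13 with hc | hc
  · -- x i₁ = 1/3 : T ∈ (7/6, 4/3), zone [4/3 - T, T - 1]
    set T := x i₂ + x i₃ with hT
    have hTb : 7/6 < T ∧ T < 4/3 := by
      rw [hSval, hi₀, hc] at hS1 hS2
      constructor <;> [linarith; linarith]
    apply zone_lemma T (4/3 - T) (T - 1) (by linarith [hTb.2]) ?_ (x i₂).den (x i₃).den hea heb ?_
    · -- fract (6T) ≠ 0
      intro h0
      have h6T : 6*T = (⌊6*T⌋ : ℚ) := by
        have hh := Int.self_sub_floor (6*T)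
        rw [h0] at hh
        linarith
      have hb1 : (7:ℚ) < (⌊6*T⌋ : ℚ) := by rw [← h6T]; linarith [hTb.1]
      have hb2 : (⌊6*T⌋ : ℚ) < 8 := by rw [← h6T]; linarith [hTb.2]
      have hz1 : (7:ℤ) < ⌊6*T⌋ := by exact_mod_cast hb1
      have hz2 : ⌊6*T⌋ < 8 := by exact_mod_cast hb2
      omega
    · intro k hk2 hk3
      obtain ⟨hlow, hup⟩ := hmain k hk2 hk3
      rw [hi₀, hc, fract_half k, fract_third k] at hlow hup
      set fa := Int.fract (((1+6*k : ℤ):ℚ) * x i₂) with hfa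
      set fb := Int.fract (((1+6*k : ℤ):ℚ) * x i₃) with hfb
      have hST : S = 5/6 + T := by rw [hSval, hi₀, hc, hT]; ring
      rw [hST] at hlow hup
      -- now : 7/3 - T ≤ fa + fb ≤ T
      have hw : Int.fract (((1+6*k : ℤ):ℚ) * T) = fa + fb +
          ((⌊((1+6*k : ℤ):ℚ) * x i₂⌋ + ⌊((1+6*k : ℤ):ℚ) * x i₃⌋
            - ⌊((1+6*k : ℤ):ℚ) * T⌋ : ℤ) : ℚ) := by
        have e1 := Int.self_sub_floor (((1+6*k : ℤ):ℚ) * x i₂)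
        have e2 := Int.self_sub_floor (((1+6*k : ℤ):ℚ) * x i₃)
        have e3 := Int.self_sub_floor (((1+6*k : ℤ):ℚ) * T)
        rw [hfa, hfb, ← e1, ← e2, ← e3]
        push_cast
        linear_combination ((1:ℚ) + 6*(k:ℚ)) * hT
      set w := ⌊((1+6*k : ℤ):ℚ) * x i₂⌋ + ⌊((1+6*k : ℤ):ℚ) * x i₃⌋ - ⌊((1+6*k : ℤ):ℚ) * T⌋
        with hwdef
      have hfr0 : 0 ≤ Int.fract (((1+6*k : ℤ):ℚ) * T) := Int.fract_nonneg _
      have hfr1 : Int.fract (((1+6*k : ℤ):ℚ) * T) < 1 := Int.fract_lt_one _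
      have hwb1 : (-2:ℚ) < (w:ℚ) := by rw [hw] at hfr0; linarith [hTb.2]
      have hwb2 : (w:ℚ) < 0 := by rw [hw] at hfr1; linarith [hTb.1]
      have hw1 : w = -1 := by
        have h1 : (-2:ℤ) < w := by exact_mod_cast hwb1
        have h2 : w < 0 := by exact_mod_cast hwb2
        omega
      rw [hw, hw1]
      push_cast
      constructor
      · linarith
      · linarith
  · -- x i₁ = 2/3 : T ∈ (5/6, 1), zone [5/3 - T, T]
    set T := x i₂ + x i₃ with hT
    have hTb : 5/6 < T ∧ T < 1 := by
      rw [hSval, hi₀, hc] at hS1 hS2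
      constructor <;> [linarith; linarith]
    apply zone_lemma T (5/3 - T) T (by linarith [hTb.2]) ?_ (x i₂).den (x i₃).den hea heb ?_
    · intro h0
      have h6T : 6*T = (⌊6*T⌋ : ℚ) := by
        have hh := Int.self_sub_floor (6*T)
        rw [h0] at hh
        linarith
      have hb1 : (5:ℚ) < (⌊6*T⌋ : ℚ) := by rw [← h6T]; linarith [hTb.1]
      have hb2 : (⌊6*T⌋ : ℚ) < 6 := by rw [← h6T]; linarith [hTb.2]
      have hz1 : (5:ℤ) < ⌊6*T⌋ := by exact_mod_cast hb1
      have hz2 : ⌊6*T⌋ < 6 := by exact_mod_cast hb2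
      omega
    · intro k hk2 hk3
      obtain ⟨hlow, hup⟩ := hmain k hk2 hk3
      rw [hi₀, hc, fract_half k, fract_two_third k] at hlow hup
      set fa := Int.fract (((1+6*k : ℤ):ℚ) * x i₂) with hfa
      set fb := Int.fract (((1+6*k : ℤ):ℚ) * x i₃) with hfb
      have hST : S = 7/6 + T := by rw [hSval, hi₀, hc, hT]; ring
      rw [hST] at hlow hup
      have hw : Int.fract (((1+6*k : ℤ):ℚ) * T) = fa + fb +
          ((⌊((1+6*k : ℤ):ℚ) * x i₂⌋ + ⌊((1+6*k : ℤ):ℚ) * x i₃⌋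
            - ⌊((1+6*k : ℤ):ℚ) * T⌋ : ℤ) : ℚ) := by
        have e1 := Int.self_sub_floor (((1+6*k : ℤ):ℚ) * x i₂)
        have e2 := Int.self_sub_floor (((1+6*k : ℤ):ℚ) * x i₃)
        have e3 := Int.self_sub_floor (((1+6*k : ℤ):ℚ) * T)
        rw [hfa, hfb, ← e1, ← e2, ← e3]
        push_cast
        linear_combination ((1:ℚ) + 6*(k:ℚ)) * hT
      set w := ⌊((1+6*k : ℤ):ℚ) * x i₂⌋ + ⌊((1+6*k : ℤ):ℚ) * x i₃⌋ - ⌊((1+6*k : ℤ):ℚ) * T⌋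
        with hwdef
      have hfr0 : 0 ≤ Int.fract (((1+6*k : ℤ):ℚ) * T) := Int.fract_nonneg _
      have hfr1 : Int.fract (((1+6*k : ℤ):ℚ) * T) < 1 := Int.fract_lt_one _
      have hwb1 : (-1:ℚ) < (w:ℚ) := by rw [hw] at hfr0; linarith [hTb.2]
      have hwb2 : (w:ℚ) < 1 := by rw [hw] at hfr1; linarith [hTb.1]
      have hw1 : w = 0 := by
        have h1 : (-1:ℤ) < w := by exact_mod_cast hwb1
        have h2 : w < 1 := by exact_mod_cast hwb2
        omega
      rw [hw, hw1]
      push_cast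
      constructor
      · linarith
      · linarith
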